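/- Let G_1, ..., G_n be finite groups with |G_i| = m_i. The kernel of the canonical surjective homomorphism from the free product G_1 * ... * G_n onto the direct product G_1 × ... × G_n is a free group of rank (n−1)·∏_{i=1}^n m_i − Σ_{i=1}^n ∏_{j≠i} m_j + 1. -/

import Mathlib

open Monoid

namespace Stmt13Aux

variable {n : ℕ} {G : Fin n → Type*} [∀ i, Group (G i)]

/-- The canonical map to the direct product. -/
def phi : CoprodI G →* ∀ i, G i := CoprodI.lift fun i => MonoidHom.mulSingle G i

/-- Partial transversal word: product of the first `k` coordinates. -/
def ptau (a : ∀ i, G i) : ℕ → CoprodI G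
  | 0 => 1
  | k + 1 => if h : k < n then ptau a k * CoprodI.of (a ⟨k, h⟩) else ptau a k

/-- Transversal: the canonical word representing the tuple `a`. -/
def tau (a : ∀ i, G i) : CoprodI G := ptau a n

/-- Truncation of a tuple. -/
def trunc (a : ∀ i, G i) (k : ℕ) : ∀ i, G i := fun j => if (j : ℕ) < k then a j else 1

lemma ptau_congr {a b : ∀ i, G i} (k : ℕ) (h : ∀ j : Fin n, (j : ℕ) < k → a j = b j) :
    ptau a k = ptau b k := by
  induction k with
  | zero => rfl
  | succ k ih =>
    simp only [ptau]
    by_cases hk : k < n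
    · rw [dif_pos hk, dif_pos hk, ih fun j hj => h j (Nat.lt_succ_of_lt hj),
        h ⟨k, hk⟩ (Nat.lt_succ_self k)]
    · rw [dif_neg hk, dif_neg hk, ih fun j hj => h j (Nat.lt_succ_of_lt hj)]

lemma phi_ptau (a : ∀ i, G i) (k : ℕ) : phi (ptau a k) = trunc a k := by
  induction k with
  | zero =>
    simp only [ptau, map_one]
    funext j
    simp [trunc]
  | succ k ih =>
    by_cases hk : k < n
    · rw [ptau, dif_pos hk, map_mul, ih]
      funext j
      simp only [Pi.mul_apply, trunc]
      have : phi (CoprodI.of (a ⟨k, hk⟩)) = Pi.mulSingle (⟨k, hk⟩ : Fin n) (a ⟨k, hk⟩) := by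
        simp [phi, CoprodI.lift_of, MonoidHom.mulSingle]; rfl
      rw [this]
      by_cases hj : j = ⟨k, hk⟩
      · subst hj
        simp [Pi.mulSingle_eq_same]
      · rw [Pi.mulSingle_eq_of_ne hj, mul_one]
        have hjk : (j : ℕ) ≠ k := fun hc => hj (Fin.ext hc)
        by_cases h1 : (j : ℕ) < k
        · rw [if_pos h1, if_pos (Nat.lt_succ_of_lt h1)]
        · rw [if_neg h1, if_neg (fun hc => (Nat.lt_succ_iff_lt_or_eq.mp hc).elim h1 hjk)]
    · rw [ptau, dif_neg hk, ih]
      funext j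
      have hj : (j : ℕ) < n := j.isLt
      have h1 : (j : ℕ) < k := lt_of_lt_of_le hj (Nat.le_of_not_lt hk)
      simp [trunc, h1, Nat.lt_succ_of_lt h1]

lemma trunc_top (a : ∀ i, G i) : trunc a n = a := by
  funext j; simp [trunc, j.isLt]

lemma phi_tau (a : ∀ i, G i) : phi (tau a) = a := by
  rw [tau, phi_ptau, trunc_top]

lemma ptau_stable (a : ∀ i, G i) (k : ℕ) (h : ∀ j : Fin n, k ≤ (j : ℕ) → a j = 1) :
    tau a = ptau a k := by
  rcases le_or_gt n k with hnk | hkn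
  · rw [tau]
    have : ∀ m, n ≤ m → ptau a m = ptau a n := by
      intro m hm
      induction m with
      | zero =>
        have : n = 0 := by omega
        exact congrArg (ptau a) this.symm
      | succ m ih =>
        rcases Nat.lt_or_ge m n with h1 | h1
        · have : n = m + 1 := by omega
          exact congrArg (ptau a) this.symm
        · rw [ptau, dif_neg (by omega), ih h1]
    exact (this k hnk).symm
  · rw [tau]
    have : ∀ m, k ≤ m → m ≤ n → ptau a m = ptau a k := by
      intro m hm1 hm2
      induction m with
      | zero =>
        have : k = 0 := by omega
        exact congrArg (ptau a) this.symm
      | succ m ih =>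
        rcases Nat.lt_or_ge k (m+1) with h1 | h1
        · have hkm : k ≤ m := by omega
          have hmn : m < n := by omega
          rw [ptau, dif_pos hmn, ih hkm (by omega), h ⟨m, hmn⟩ hkm, map_one, mul_one]
        · have : k = m + 1 := by omega
          exact congrArg (ptau a) this.symm
    exact this n hkn.le le_rfl

lemma ptau_succ (a : ∀ i, G i) (i : Fin n) :
    ptau a ((i : ℕ) + 1) = ptau a i * CoprodI.of (a i) := by
  rw [ptau, dif_pos i.isLt]

/-- Key identity: multiplying the transversal on the right by a letter in position `i`,
when all later coordinates are trivial. -/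
lemma tau_mul_of (a : ∀ i, G i) (i : Fin n) (g : G i)
    (h : ∀ j : Fin n, i < j → a j = 1) :
    tau a * CoprodI.of g = tau (a * Pi.mulSingle i g) := by
  have ha : tau a = ptau a i * CoprodI.of (a i) := by
    rw [← ptau_succ, ptau_stable a ((i : ℕ) + 1)]
    intro j hj
    exact h j (by omega)
  have key : ∀ j : Fin n, i < j → (a * Pi.mulSingle i g) j = 1 := by
    intro j hj
    have : j ≠ i := fun hc => by subst hc; exact lt_irrefl _ hj
    simp [Pi.mul_apply, Pi.mulSingle_eq_of_ne this, h j hj]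
  have hb : tau (a * Pi.mulSingle i g) = ptau (a * Pi.mulSingle i g) i *
      CoprodI.of ((a * Pi.mulSingle i g) i) := by
    rw [← ptau_succ, ptau_stable _ ((i : ℕ) + 1)]
    intro j hj
    exact key j (by omega)
  rw [ha, hb, mul_assoc]
  congr 1
  · apply ptau_congr
    intro j hj
    have : j ≠ i := fun hc => by simp [hc] at hj
    simp [Pi.mul_apply, Pi.mulSingle_eq_of_ne this]
  · rw [Pi.mul_apply, Pi.mulSingle_eq_same, ← map_mul]

lemma tau_one : tau (1 : ∀ i, G i) = 1 := by
  have := ptau_stable (1 : ∀ i, G i) 0 (fun j _ => rfl)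
  rw [this]; rfl


section Part2

variable (G) in
/-- The index set of the free basis of the kernel. -/
def Idx : Type _ := {q : Σ i : Fin n, G i × (∀ j, G j) //
  q.2.1 ≠ 1 ∧ q.2.2 q.1 = 1 ∧ ∃ j, q.1 < j ∧ q.2.2 j ≠ 1}

lemma exists_update_iff (i : Fin n) (a : ∀ j, G j) (y : G i) :
    (∃ j, i < j ∧ Function.update a i y j ≠ 1) ↔ ∃ j, i < j ∧ a j ≠ 1 := by
  constructor <;> rintro ⟨j, hj, hja⟩ <;> refine ⟨j, hj, ?_⟩
  · have hji : j ≠ i := fun hc => by subst hc; exact lt_irrefl _ hj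
    rwa [Function.update_of_ne hji] at hja
  · have hji : j ≠ i := fun hc => by subst hc; exact lt_irrefl _ hj
    rwa [Function.update_of_ne hji]

open scoped Classical in
/-- Free-group generator associated to a Schreier element (or `1` in degenerate cases). -/
noncomputable def gen (i : Fin n) (a : ∀ j, G j) (x : G i) : FreeGroup (Idx G) :=
  if h : x ≠ 1 ∧ ∃ j, i < j ∧ a j ≠ 1 then
    FreeGroup.of ⟨⟨i, x, Function.update a i 1⟩, h.1, Function.update_self i 1 a,
      (exists_update_iff i a 1).mpr h.2⟩
  else 1

lemma gen_one (i : Fin n) (a : ∀ j, G j) : gen i a (1 : G i) = 1 := by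
  rw [gen, dif_neg]
  rintro ⟨h1, -⟩
  exact h1 rfl

lemma gen_of_triv (i : Fin n) (a : ∀ j, G j) (x : G i) (h : ∀ j, i < j → a j = 1) :
    gen i a x = 1 := by
  rw [gen, dif_neg]
  rintro ⟨-, j, hj, hja⟩
  exact hja (h j hj)

lemma gen_update (i : Fin n) (a : ∀ j, G j) (y : G i) (x : G i) :
    gen i (Function.update a i y) x = gen i a x := by
  unfold gen
  by_cases h : x ≠ 1 ∧ ∃ j, i < j ∧ a j ≠ 1
  · rw [dif_pos (by exact ⟨h.1, (exists_update_iff i a y).mpr h.2⟩), dif_pos h]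
    have : Function.update (Function.update a i y) i (1 : G i) = Function.update a i 1 :=
      Function.update_idem _ _ _
    congr 1
    exact Subtype.ext (by simp only [this])
  · rw [dif_neg h, dif_neg]
    rintro ⟨h1, h2⟩
    exact h ⟨h1, (exists_update_iff i a y).mp h2⟩

variable (G) in
/-- Right translations as permutations. -/
def rperm : (∀ i, G i) →* Equiv.Perm (∀ i, G i) where
  toFun x := Equiv.mulRight x⁻¹
  map_one' := by ext a; simp
  map_mul' x y := by ext a; simp [mul_assoc]

lemma rperm_symm_apply (x a : ∀ i, G i) : (rperm G x).symm a = a * x := by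
  simp [rperm]

variable (G) in
/-- The action of permutations of `A` on functions `A → F` by precomposition. -/
def actPerm : Equiv.Perm (∀ i, G i) →* MulAut ((∀ i, G i) → FreeGroup (Idx G)) where
  toFun σ :=
    { toFun := fun c => c ∘ σ.symm
      invFun := fun c => c ∘ σ
      left_inv := fun c => by funext a; simp
      right_inv := fun c => by funext a; simp
      map_mul' := fun c d => rfl }
  map_one' := MulEquiv.ext fun c => funext fun a => rfl
  map_mul' σ τ := MulEquiv.ext fun c => funext fun a => rfl

lemma actPerm_apply (σ : Equiv.Perm (∀ i, G i)) (c : (∀ i, G i) → FreeGroup (Idx G))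
    (a : ∀ i, G i) : actPerm G σ c a = c (σ.symm a) := rfl

lemma mul_single_eq_update (a : ∀ j, G j) (i : Fin n) (s : G i) :
    a * Pi.mulSingle i s = Function.update a i (a i * s) := by
  funext j
  by_cases hj : j = i
  · subst hj; simp
  · simp [Pi.mulSingle_eq_of_ne hj, Function.update_of_ne hj]

noncomputable def cfun (i : Fin n) (s : G i) : (∀ j, G j) → FreeGroup (Idx G) :=
  fun a => (gen i a (a i))⁻¹ * gen i a (a i * s)

noncomputable def hcomp (i : Fin n) :
    G i →* ((∀ j, G j) → FreeGroup (Idx G)) ⋊[actPerm G] Equiv.Perm (∀ j, G j) where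
  toFun s := ⟨cfun i s, rperm G (Pi.mulSingle i s)⟩
  map_one' := by
    have h1 : cfun i (1 : G i) = 1 := by
      funext a
      simp [cfun]
    have h2 : rperm G (Pi.mulSingle i (1 : G i)) = 1 := by
      rw [Pi.mulSingle_one, map_one]
    show (⟨cfun i (1 : G i), rperm G (Pi.mulSingle i (1 : G i))⟩ :
      ((∀ j, G j) → FreeGroup (Idx G)) ⋊[actPerm G] Equiv.Perm (∀ j, G j)) = 1
    rw [h1, h2]
    rfl
  map_mul' s t := by
    show (⟨cfun i (s * t), rperm G (Pi.mulSingle i (s * t))⟩ :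
        ((∀ j, G j) → FreeGroup (Idx G)) ⋊[actPerm G] Equiv.Perm (∀ j, G j)) =
      ⟨cfun i s, rperm G (Pi.mulSingle i s)⟩ * ⟨cfun i t, rperm G (Pi.mulSingle i t)⟩
    rw [SemidirectProduct.mul_def]
    have hright : rperm G (Pi.mulSingle i (s * t)) =
        rperm G (Pi.mulSingle i s) * rperm G (Pi.mulSingle i t) := by
      rw [Pi.mulSingle_mul, map_mul]
    have hleft : cfun i (s * t) =
        cfun i s * actPerm G (rperm G (Pi.mulSingle i s)) (cfun i t) := by
      funext a
      rw [Pi.mul_apply, actPerm_apply, rperm_symm_apply, mul_single_eq_update]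
      simp only [cfun, gen_update, Function.update_self]
      rw [mul_assoc, ← mul_assoc (gen i a (a i * s)), mul_inv_cancel, one_mul, mul_assoc]
    simp only [hleft, hright]

/-- The main cocycle homomorphism into the wreath-type product. -/
noncomputable def Psi : CoprodI G →*
    ((∀ j, G j) → FreeGroup (Idx G)) ⋊[actPerm G] Equiv.Perm (∀ j, G j) :=
  CoprodI.lift hcomp

lemma phi_of {i : Fin n} (g : G i) : phi (CoprodI.of g) = Pi.mulSingle i g := by
  simp [phi, CoprodI.lift_of, MonoidHom.mulSingle]; rfl

lemma Psi_of {i : Fin n} (g : G i) : Psi (CoprodI.of g) = hcomp i g := by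
  simp [Psi, CoprodI.lift_of]

lemma right_Psi (p : CoprodI G) : (Psi p).right = rperm G (phi p) := by
  have h : (SemidirectProduct.rightHom.comp Psi : CoprodI G →* _) = (rperm G).comp phi := by
    apply CoprodI.ext_hom
    intro i
    ext s
    simp [Psi, CoprodI.lift_of, hcomp, phi_of, phi]
  have := DFunLike.congr_fun h p
  simpa using this

lemma left_mul (p q : CoprodI G) (a : ∀ j, G j) :
    (Psi (p * q)).left a = (Psi p).left a * (Psi q).left (a * phi p) := by
  rw [map_mul, SemidirectProduct.mul_left, Pi.mul_apply, right_Psi, actPerm_apply,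
    rperm_symm_apply]

lemma left_ptau (a : ∀ j, G j) (k : ℕ) : (Psi (ptau a k)).left 1 = 1 := by
  induction k with
  | zero => simp [ptau]
  | succ k ih =>
    by_cases hk : k < n
    · rw [ptau, dif_pos hk, left_mul, ih, one_mul, one_mul, phi_ptau, Psi_of]
      show cfun ⟨k, hk⟩ (a ⟨k, hk⟩) (trunc a k) = 1
      have h1 : trunc a k ⟨k, hk⟩ = 1 := by simp [trunc]
      have h2 : ∀ j, (⟨k, hk⟩ : Fin n) < j → trunc a k j = 1 := by
        intro j hj
        have : ¬ ((j : ℕ) < k) := by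
          simp only [Fin.lt_def] at hj
          omega
        simp [trunc, this]
      rw [cfun, h1, gen_one, one_mul, inv_one, one_mul, gen_of_triv _ _ _ h2]
    · rw [ptau, dif_neg hk]; exact ih

lemma left_tau (a : ∀ j, G j) : (Psi (tau a)).left 1 = 1 := left_ptau a n

lemma left_tau_inv (a : ∀ j, G j) : (Psi (tau a)⁻¹).left a = 1 := by
  have h := left_mul (tau a) (tau a)⁻¹ 1
  rw [mul_inv_cancel, phi_tau, one_mul, left_tau, one_mul] at h
  rw [← h]
  simp

noncomputable def V (i : Fin n) (a : ∀ j, G j) (x : G i) : CoprodI G :=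
  tau (Function.update a i 1) * CoprodI.of x * (tau (Function.update a i x))⁻¹

lemma update_one_mul_single (a : ∀ j, G j) (i : Fin n) (x : G i) :
    Function.update a i 1 * Pi.mulSingle i x = Function.update a i x := by
  rw [mul_single_eq_update, Function.update_self, one_mul, Function.update_idem]

lemma phi_V (i : Fin n) (a : ∀ j, G j) (x : G i) : phi (V i a x) = 1 := by
  rw [V, map_mul, map_mul, map_inv, phi_tau, phi_tau, phi_of, update_one_mul_single,
    mul_inv_cancel]

lemma left_V (i : Fin n) (a : ∀ j, G j) (x : G i) : (Psi (V i a x)).left 1 = gen i a x := by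
  rw [V, left_mul, left_mul, left_tau, one_mul, one_mul, phi_tau, map_mul, phi_tau, phi_of,
    update_one_mul_single, one_mul, left_tau_inv, mul_one, Psi_of]
  show cfun i x (Function.update a i 1) = gen i a x
  rw [cfun, Function.update_self, gen_one, inv_one, one_mul, one_mul, gen_update]

lemma V_one (i : Fin n) (a : ∀ j, G j) : V i a (1 : G i) = 1 := by
  rw [V, map_one, mul_one, mul_inv_cancel]

lemma V_triv (i : Fin n) (a : ∀ j, G j) (x : G i) (h : ∀ j, i < j → a j = 1) :
    V i a x = 1 := by
  have hb : ∀ j, i < j → Function.update a i 1 j = 1 := by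
    intro j hj
    have hji : j ≠ i := fun hc => by subst hc; exact lt_irrefl _ hj
    rw [Function.update_of_ne hji]
    exact h j hj
  rw [V, tau_mul_of _ _ _ hb, update_one_mul_single, mul_inv_cancel]

/-- The candidate basis map. -/
noncomputable def fmap : FreeGroup (Idx G) →* CoprodI G :=
  FreeGroup.lift fun q : Idx G => V q.1.1 q.1.2.2 q.1.2.1

lemma fmap_mem_ker (w : FreeGroup (Idx G)) : fmap w ∈ phi.ker := by
  rw [MonoidHom.mem_ker]
  have h : (phi.comp fmap : FreeGroup (Idx G) →* _) = 1 := by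
    apply FreeGroup.ext_hom
    intro q
    simp [fmap, FreeGroup.lift_apply_of, phi_V]
  have := DFunLike.congr_fun h w
  simpa using this

lemma V_mem_range (i : Fin n) (a : ∀ j, G j) (x : G i) : V i a x ∈ fmap.range := by
  by_cases hex : ∃ j, i < j ∧ a j ≠ 1
  · by_cases hx : x = 1
    · subst hx; rw [V_one]; exact one_mem _
    · refine ⟨FreeGroup.of ⟨⟨i, x, Function.update a i 1⟩, hx, Function.update_self i 1 a,
        (exists_update_iff i a 1).mpr hex⟩, ?_⟩
      erw [fmap, FreeGroup.lift_apply_of]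
      show V i (Function.update a i 1) x = V i a x
      rw [V, V, Function.update_idem, Function.update_idem]
  · push_neg at hex
    rw [V_triv i a x hex]
    exact one_mem _

end Part2


section Part3

/-- Retraction from the kernel onto the free group. -/
noncomputable def rk : (phi : CoprodI G →* ∀ i, G i).ker →* FreeGroup (Idx G) where
  toFun k := (Psi (k : CoprodI G)).left 1
  map_one' := by simp
  map_mul' k k' := by
    have hk : phi (k : CoprodI G) = 1 := MonoidHom.mem_ker.mp k.2
    show (Psi ((k : CoprodI G) * (k' : CoprodI G))).left 1 =
      (Psi (k : CoprodI G)).left 1 * (Psi (k' : CoprodI G)).left 1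
    rw [left_mul, hk, mul_one]

/-- The basis map, corestricted to the kernel. -/
noncomputable def fcod : FreeGroup (Idx G) →* (phi : CoprodI G →* ∀ i, G i).ker :=
  MonoidHom.codRestrict fmap _ fmap_mem_ker

lemma rk_fcod (w : FreeGroup (Idx G)) : rk (fcod w) = w := by
  have h : (rk.comp fcod : FreeGroup (Idx G) →* _) = MonoidHom.id _ := by
    apply FreeGroup.ext_hom
    intro q
    obtain ⟨⟨i, x, b⟩, hx, hbi, hex⟩ := q
    show rk (fcod (FreeGroup.of _)) = FreeGroup.of _
    have h1 : (fcod (FreeGroup.of ⟨⟨i, x, b⟩, hx, hbi, hex⟩) : CoprodI G) = V i b x := by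
      show fmap (FreeGroup.of _) = _
      erw [fmap, FreeGroup.lift_apply_of]
    show (Psi ((fcod (FreeGroup.of ⟨⟨i, x, b⟩, hx, hbi, hex⟩) : CoprodI G))).left 1 = _
    rw [h1, left_V, gen, dif_pos ⟨hx, hex⟩]
    congr 1
    refine Subtype.ext ?_
    have : Function.update b i (1 : G i) = b := by
      conv_lhs => rw [← hbi]
      exact Function.update_eq_self i b
    simp only [this]
  exact DFunLike.congr_fun h w

lemma fcod_injective : Function.Injective (fcod : FreeGroup (Idx G) →* _) :=
  Function.LeftInverse.injective rk_fcod

lemma key_surj (p : CoprodI G) :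
    ∀ a : ∀ j, G j, tau a * p * (tau (a * phi p))⁻¹ ∈ fmap.range := by
  induction p using CoprodI.induction_on with
  | one =>
    intro a
    rw [mul_one, map_one, mul_one, mul_inv_cancel]
    exact one_mem _
  | of i g =>
    intro a
    have hg : CoprodI.of g = (CoprodI.of (a i))⁻¹ * CoprodI.of (a i * g) := by
      rw [← map_inv, ← map_mul, inv_mul_cancel_left]
    have heq : tau a * CoprodI.of g * (tau (a * phi (CoprodI.of g)))⁻¹ =
        (V i a (a i))⁻¹ * V i a (a i * g) := by
      rw [phi_of, mul_single_eq_update, V, V, Function.update_eq_self, hg]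
      group
    rw [heq]
    exact mul_mem (inv_mem (V_mem_range i a (a i))) (V_mem_range i a (a i * g))
  | mul x y hx hy =>
    intro a
    have h := mul_mem (hx a) (hy (a * phi x))
    have heq : tau a * (x * y) * (tau (a * phi (x * y)))⁻¹ =
        (tau a * x * (tau (a * phi x))⁻¹) * (tau (a * phi x) * y * (tau (a * phi x * phi y))⁻¹) := by
      rw [map_mul, ← mul_assoc (a := a)]
      group
    rw [heq]
    exact h
  done

lemma fcod_surjective : Function.Surjective (fcod : FreeGroup (Idx G) →* _) := by
  intro k
  have hk : phi (k : CoprodI G) = 1 := MonoidHom.mem_ker.mp k.2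
  have h := key_surj (k : CoprodI G) 1
  rw [hk, mul_one, tau_one, one_mul, inv_one, mul_one] at h
  obtain ⟨w, hw⟩ := h
  exact ⟨w, Subtype.ext hw⟩

/-- The kernel of the canonical surjection is free on `Idx G`. -/
noncomputable def kerEquiv : FreeGroup (Idx G) ≃* (phi : CoprodI G →* ∀ i, G i).ker :=
  MulEquiv.ofBijective fcod ⟨fcod_injective, fcod_surjective⟩

end Part3


section Part4

open Finset

variable [∀ i, Fintype (G i)]

/-- Counting tuples forced to be `1` on a set of coordinates. -/
lemma nat_card_pi_support (p : Fin n → Prop) [DecidablePred p] :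
    Nat.card {b : ∀ j, G j // ∀ j, p j → b j = 1} =
      ∏ j ∈ Finset.univ.filter (fun j => ¬ p j), Fintype.card (G j) := by
  classical
  have e : {b : ∀ j, G j // ∀ j, p j → b j = 1} ≃ ∀ j : {j : Fin n // ¬ p j}, G j :=
    { toFun := fun b j => b.1 j.1
      invFun := fun c => ⟨fun j => if h : p j then 1 else c ⟨j, h⟩, fun j hj => dif_pos hj⟩
      left_inv := fun b => Subtype.ext (funext fun j => by
        dsimp only
        split_ifs with h
        · exact (b.2 j h).symm
        · rfl)
      right_inv := fun c => funext fun j => dif_neg j.2 }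
  rw [Nat.card_congr e, Nat.card_eq_fintype_card, Fintype.card_pi]
  exact (Finset.prod_subtype (Finset.univ.filter fun j => ¬ p j) (fun j => by simp)
    (fun j => Fintype.card (G j))).symm

lemma card_T (i : Fin n) :
    Nat.card {b : ∀ j, G j // ∀ j, j = i → b j = 1} =
      ∏ j ∈ Finset.univ.erase i, Fintype.card (G j) := by
  classical
  rw [nat_card_pi_support]
  congr 1
  exact Finset.filter_ne' Finset.univ i

lemma card_S (i : Fin n) :
    Nat.card {b : ∀ j, G j // ∀ j, i ≤ j → b j = 1} =
      ∏ j ∈ Finset.univ.filter (fun j : Fin n => j < i), Fintype.card (G j) := by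
  classical
  rw [nat_card_pi_support]
  congr 1
  apply Finset.filter_congr
  intro j _
  simp [not_le]

/-- The count of the `b`-part of the basis. -/
lemma card_bset (i : Fin n) :
    Nat.card {b : ∀ j, G j // b i = 1 ∧ ∃ j, i < j ∧ b j ≠ 1} =
      (∏ j ∈ Finset.univ.erase i, Fintype.card (G j)) -
        ∏ j ∈ Finset.univ.filter (fun j : Fin n => j < i), Fintype.card (G j) := by
  classical
  have e2 : {b : ∀ j, G j // b i = 1 ∧ ∃ j, i < j ∧ b j ≠ 1} ≃
      {c : {b : ∀ j, G j // ∀ j, j = i → b j = 1} // ¬ ∀ j, i < j → c.1 j = 1} :=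
    { toFun := fun b => ⟨⟨b.1, fun j hj => hj ▸ b.2.1⟩, by
        obtain ⟨j, hj, hja⟩ := b.2.2
        intro hall
        exact hja (hall j hj)⟩
      invFun := fun c => ⟨c.1.1, c.1.2 i rfl, by
        have := c.2
        push_neg at this
        obtain ⟨j, hj, hja⟩ := this
        exact ⟨j, hj, hja⟩⟩
      left_inv := fun b => rfl
      right_inv := fun c => rfl }
  have e3 : {c : {b : ∀ j, G j // ∀ j, j = i → b j = 1} // ∀ j, i < j → c.1 j = 1} ≃
      {b : ∀ j, G j // ∀ j, i ≤ j → b j = 1} :=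
    { toFun := fun c => ⟨c.1.1, fun j hj => by
        rcases eq_or_lt_of_le hj with h | h
        · exact c.1.2 j h.symm
        · exact c.2 j h⟩
      invFun := fun b => ⟨⟨b.1, fun j hj => b.2 j (hj ▸ le_rfl)⟩, fun j hj => b.2 j hj.le⟩
      left_inv := fun c => rfl
      right_inv := fun b => rfl }
  rw [Nat.card_congr e2, Nat.card_eq_fintype_card, Fintype.card_subtype_compl,
    ← Nat.card_eq_fintype_card, ← Nat.card_eq_fintype_card, Nat.card_congr e3, card_T, card_S]

lemma card_S_le_card_T (i : Fin n) :
    (∏ j ∈ Finset.univ.filter (fun j : Fin n => j < i), Fintype.card (G j)) ≤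
      ∏ j ∈ Finset.univ.erase i, Fintype.card (G j) := by
  classical
  apply Finset.prod_le_prod_of_subset_of_one_le'
  · intro j hj
    simp only [Finset.mem_filter, Finset.mem_univ, true_and] at hj
    simp only [Finset.mem_erase, Finset.mem_univ, and_true]
    exact ne_of_lt hj
  · intro j _ _
    exact Fintype.card_pos

lemma card_xset (i : Fin n) :
    Nat.card {x : G i // ¬ x = 1} = Fintype.card (G i) - 1 := by
  classical
  rw [Nat.card_eq_fintype_card, Fintype.card_subtype_compl, Fintype.card_subtype_eq]

variable (G) in
/-- Partial product of the orders. -/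
def Qp [∀ i, Fintype (G i)] (k : ℕ) : ℤ :=
  ∏ j ∈ Finset.univ.filter (fun j : Fin n => (j : ℕ) < k), (Fintype.card (G j) : ℤ)

lemma Qp_zero : Qp G 0 = 1 := by
  simp [Qp]

lemma Qp_top : Qp G n = ∏ i, (Fintype.card (G i) : ℤ) := by
  rw [Qp]
  apply Finset.prod_congr _ fun _ _ => rfl
  apply Finset.filter_true_of_mem
  intro j _
  exact j.isLt

lemma Qp_succ (i : Fin n) :
    (Fintype.card (G i) : ℤ) * Qp G (i : ℕ) = Qp G ((i : ℕ) + 1) := by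
  rw [Qp, Qp]
  have hins : Finset.univ.filter (fun j : Fin n => (j : ℕ) < (i : ℕ) + 1) =
      insert i (Finset.univ.filter (fun j : Fin n => (j : ℕ) < (i : ℕ))) := by
    ext j
    simp only [Finset.mem_filter, Finset.mem_univ, true_and, Finset.mem_insert]
    constructor
    · intro h
      rcases Nat.lt_succ_iff_lt_or_eq.mp h with h | h
      · exact Or.inr h
      · exact Or.inl (Fin.ext h)
    · rintro (h | h)
      · subst h; exact Nat.lt_succ_self _
      · exact Nat.lt_succ_of_lt h
  rw [hins, Finset.prod_insert (by simp)]

lemma summand (i : Fin n) :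
    ((Nat.card {x : G i // ¬ x = 1} *
      Nat.card {b : ∀ j, G j // b i = 1 ∧ ∃ j, i < j ∧ b j ≠ 1} : ℕ) : ℤ) =
    ((Fintype.card (G i) : ℤ) - 1) *
      ((∏ j ∈ Finset.univ.erase i, (Fintype.card (G j) : ℤ)) - Qp G (i : ℕ)) := by
  classical
  have hone : (1 : ℕ) ≤ Fintype.card (G i) := Fintype.card_pos
  rw [Nat.cast_mul, card_xset, card_bset,
    Nat.cast_sub hone, Nat.cast_sub (card_S_le_card_T i)]
  have hfilter : (Finset.univ.filter (fun j : Fin n => (j : ℕ) < (i : ℕ)))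
      = Finset.univ.filter (fun j : Fin n => j < i) := by
    apply Finset.filter_congr
    intro j _
    exact Iff.symm Fin.lt_def
  rw [Qp, hfilter]
  push_cast
  ring

/-- Cardinality of the basis. -/
lemma card_idx :
    (Nat.card (Idx G) : ℤ) = ((n : ℤ) - 1) * (∏ i, (Fintype.card (G i) : ℤ)) -
      (∑ i, ∏ j ∈ Finset.univ.erase i, (Fintype.card (G j) : ℤ)) + 1 := by
  classical
  have e1 : Idx G ≃ Σ i : Fin n,
      ({x : G i // ¬ x = 1} × {b : ∀ j, G j // b i = 1 ∧ ∃ j, i < j ∧ b j ≠ 1}) :=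
    { toFun := fun q => ⟨q.1.1, ⟨⟨q.1.2.1, q.2.1⟩, ⟨q.1.2.2, q.2.2.1, q.2.2.2⟩⟩⟩
      invFun := fun t => ⟨⟨t.1, t.2.1.1, t.2.2.1⟩, t.2.1.2, t.2.2.2.1, t.2.2.2.2⟩
      left_inv := fun q => rfl
      right_inv := fun t => rfl }
  have hcard : Nat.card (Idx G) = ∑ i : Fin n,
      Nat.card {x : G i // ¬ x = 1} *
        Nat.card {b : ∀ j, G j // b i = 1 ∧ ∃ j, i < j ∧ b j ≠ 1} := by
    rw [Nat.card_congr e1, Nat.card_eq_fintype_card, Fintype.card_sigma]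
    apply Finset.sum_congr rfl
    intro i _
    rw [Fintype.card_prod, Nat.card_eq_fintype_card, Nat.card_eq_fintype_card]
  rw [hcard, Nat.cast_sum]
  calc (∑ i : Fin n, ((Nat.card {x : G i // ¬ x = 1} *
        Nat.card {b : ∀ j, G j // b i = 1 ∧ ∃ j, i < j ∧ b j ≠ 1} : ℕ) : ℤ))
      = ∑ i : Fin n, ((∏ j, (Fintype.card (G j) : ℤ))
          - (∏ j ∈ Finset.univ.erase i, (Fintype.card (G j) : ℤ))
          - (Qp G ((i : ℕ) + 1) - Qp G (i : ℕ))) := by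
        apply Finset.sum_congr rfl
        intro i _
        rw [summand i, ← Finset.mul_prod_erase Finset.univ
          (fun j => (Fintype.card (G j) : ℤ)) (Finset.mem_univ i), ← Qp_succ i]
        ring
    _ = (∑ _i : Fin n, ∏ j, (Fintype.card (G j) : ℤ))
          - (∑ i : Fin n, ∏ j ∈ Finset.univ.erase i, (Fintype.card (G j) : ℤ))
          - ((∏ j, (Fintype.card (G j) : ℤ)) - 1) := by
        rw [Finset.sum_sub_distrib, Finset.sum_sub_distrib]
        congr 1
        rw [Fin.sum_univ_eq_sum_range (fun k => Qp G (k + 1) - Qp G k) n,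
          Finset.sum_range_sub (Qp G) n, Qp_zero, Qp_top]
    _ = ((n : ℤ) - 1) * (∏ i, (Fintype.card (G i) : ℤ)) -
          (∑ i, ∏ j ∈ Finset.univ.erase i, (Fintype.card (G j) : ℤ)) + 1 := by
        rw [Finset.sum_const, Finset.card_univ, Fintype.card_fin]
        push_cast
        ring

instance fin_idx : Finite (Idx G) := by
  unfold Idx
  infer_instance

end Part4

end Stmt13Aux

/-- the kernel of the canonical surjection from the free product
`G 1 * ⋯ * G n` onto the direct product `G 1 × ⋯ × G n` of finite groups is a free group
of rank `(n-1)·∏ mᵢ − Σᵢ ∏_{j≠i} mⱼ + 1`, where `mᵢ = |G i|`. -/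
theorem stmt_13 (n : ℕ) (G : Fin n → Type*) [∀ i, Group (G i)] [∀ i, Fintype (G i)] :
    ∃ R : ℕ, (R : ℤ) = ((n : ℤ) - 1) * (∏ i, (Fintype.card (G i) : ℤ)) -
        (∑ i, ∏ j ∈ Finset.univ.erase i, (Fintype.card (G j) : ℤ)) + 1 ∧
      Nonempty ((Monoid.CoprodI.lift fun i => MonoidHom.mulSingle G i).ker ≃*
        FreeGroup (Fin R)) := by
  classical
  refine ⟨Nat.card (Stmt13Aux.Idx G), Stmt13Aux.card_idx, ⟨?_⟩⟩
  exact Stmt13Aux.kerEquiv.symm.trans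
    (FreeGroup.freeGroupCongr (Finite.equivFin (Stmt13Aux.Idx G)))
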